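/- Let r and k be odd positive integers with r > 1 such that 2^α · k is a Schemmel nontotient number of order r for all nonnegative integers α. If k₁ and k₂ are relatively prime positive integers with k₁k₂ = k, then either 2^α · k₁ is a Schemmel nontotient of order r for all nonnegative α, or 2^α · k₂ is a Schemmel nontotient of order r for all nonnegative α. -/
import Mathlib


/-- The `r`-th Schemmel totient function: multiplicative, with
`S_r(p^a) = 0` if `p ≤ r` and `S_r(p^a) = p^(a-1) * (p - r)` if `p > r`. -/
def schemmel (r n : ℕ) : ℕ :=
  n.factorization.prod (fun p a => if p ≤ r then 0 else p ^ (a - 1) * (p - r))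

lemma schemmel_mul (r m n : ℕ) (hm : m ≠ 0) (hn : n ≠ 0) (h : Nat.Coprime m n) :
    schemmel r (m * n) = schemmel r m * schemmel r n := by
  unfold schemmel
  rw [Nat.factorization_mul hm hn, Finsupp.prod_add_index_of_disjoint]
  simpa using h.disjoint_primeFactors

lemma schemmel_prime_pow (r p a : ℕ) (hp : p.Prime) (ha : a ≠ 0) :
    schemmel r (p ^ a) = if p ≤ r then 0 else p ^ (a - 1) * (p - r) := by
  unfold schemmel
  rw [hp.factorization_pow, Finsupp.prod, Finsupp.support_single_ne_zero p ha,
    Finset.prod_singleton, Finsupp.single_eq_same]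

lemma schemmel_eq_zero (r p x : ℕ) (hp : p.Prime) (hpx : p ∣ x) (hx : x ≠ 0) (hpr : p ≤ r) :
    schemmel r x = 0 := by
  unfold schemmel
  rw [Finsupp.prod]
  apply Finset.prod_eq_zero (i := p)
  · rw [Nat.support_factorization, Nat.mem_primeFactors]; exact ⟨hp, hpx, hx⟩
  · simp [hpr]

lemma schemmel_factor (r p x : ℕ) (hp : p.Prime) (hx : x ≠ 0) (hpx : p ∣ x) (hpr : r < p) :
    schemmel r x =
      p ^ (x.factorization p - 1) * (p - r) * schemmel r (ordCompl[p] x) := by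
  have ha : x.factorization p ≠ 0 := (hp.factorization_pos_of_dvd hx hpx).ne'
  conv_lhs => rw [← Nat.ordProj_mul_ordCompl_eq_self x p]
  rw [schemmel_mul r _ _ (pow_ne_zero _ hp.pos.ne') (Nat.ordCompl_pos p hx).ne'
      ((Nat.coprime_ordCompl hp hx).pow_left _),
    schemmel_prime_pow r p _ hp ha, if_neg (by omega)]

/-- Strip off a prime appearing to exponent exactly 1 whose `p - r` is a power of 2. -/
lemma schemmel_strip (r p x α k e : ℕ) (hp : p.Prime) (hx : 0 < x) (hpx : p ∣ x)
    (hb : x.factorization p = 1) (hd : p - r = 2 ^ e) (hpr : r < p)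
    (hkodd : Odd k) (hk : 0 < k) (hs : schemmel r x = 2 ^ α * k) :
    ∃ β m, 0 < m ∧ m < x ∧ schemmel r m = 2 ^ β * k := by
  have hmpos : 0 < ordCompl[p] x := Nat.ordCompl_pos p hx.ne'
  have hmx : p ^ (x.factorization p) * ordCompl[p] x = x :=
    Nat.ordProj_mul_ordCompl_eq_self x p
  have hple : 2 ≤ p ^ x.factorization p := le_trans hp.two_le (Nat.le_self_pow (by omega) p)
  have hmlt : ordCompl[p] x < x := by nlinarith
  have heq : 2 ^ e * schemmel r (ordCompl[p] x) = 2 ^ α * k := by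
    rw [← hs]
    conv_rhs => rw [schemmel_factor r p x hp hx.ne' hpx hpr]
    rw [hb, hd]
    ring
  have hdvd : (2 : ℕ) ^ e ∣ 2 ^ α := by
    have h1 : (2 : ℕ) ^ e ∣ 2 ^ α * k := ⟨schemmel r (ordCompl[p] x), heq.symm⟩
    have h2 : Nat.Coprime (2 ^ e) k := Nat.Coprime.pow_left _ hkodd.coprime_two_left
    exact h2.dvd_of_dvd_mul_right h1
  have hea : e ≤ α := (Nat.pow_dvd_pow_iff_le_right (by norm_num)).1 hdvd
  refine ⟨α - e, ordCompl[p] x, hmpos, hmlt, ?_⟩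
  have h3 : 2 ^ e * schemmel r (ordCompl[p] x) = 2 ^ e * (2 ^ (α - e) * k) := by
    rw [heq, ← mul_assoc, ← pow_add]
    congr 2
    omega
  exact Nat.eq_of_mul_eq_mul_left (by positivity) h3

lemma schemmel_key (r k₁ k₂ : ℕ) (hr : 1 < r) (hrodd : Odd r)
    (hk₁ : 0 < k₁) (hk₂ : 0 < k₂) (hk₁odd : Odd k₁) (hk₂odd : Odd k₂)
    (hcop : Nat.Coprime k₁ k₂) :
    ∀ n x₁ x₂ α₁ α₂, x₁ + x₂ ≤ n → 0 < x₁ → 0 < x₂ →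
      schemmel r x₁ = 2 ^ α₁ * k₁ → schemmel r x₂ = 2 ^ α₂ * k₂ →
      ∃ α x, 0 < x ∧ schemmel r x = 2 ^ α * (k₁ * k₂) := by
  intro n
  induction n with
  | zero => intro x₁ x₂ _ _ h h1 h2 _ _; omega
  | succ n ih =>
    intro x₁ x₂ α₁ α₂ hle hx₁ hx₂ hs₁ hs₂
    by_cases hc : Nat.Coprime x₁ x₂
    · refine ⟨α₁ + α₂, x₁ * x₂, by positivity, ?_⟩
      rw [schemmel_mul r _ _ hx₁.ne' hx₂.ne' hc, hs₁, hs₂, pow_add]; ring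
    · obtain ⟨p, hp, hp₁, hp₂⟩ : ∃ p, p.Prime ∧ p ∣ x₁ ∧ p ∣ x₂ := by
        obtain ⟨p, hp, hpd⟩ := Nat.exists_prime_and_dvd (hc : Nat.gcd x₁ x₂ ≠ 1)
        exact ⟨p, hp, hpd.trans (Nat.gcd_dvd_left _ _), hpd.trans (Nat.gcd_dvd_right _ _)⟩
      have hr3 : 3 ≤ r := by obtain ⟨t, ht⟩ := hrodd; omega
      have hpr : r < p := by
        by_contra hle'
        push_neg at hle'
        have h0 := schemmel_eq_zero r p x₁ hp hp₁ hx₁.ne' hle'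
        rw [hs₁] at h0
        have : 0 < 2 ^ α₁ * k₁ := by positivity
        omega
      have hpodd : Odd p := hp.odd_of_ne_two (by omega)
      -- p - r is a power of 2
      have hdpos : 0 < p - r := by omega
      have hdeven : 2 ∣ p - r := by
        obtain ⟨s, hs⟩ := hpodd; obtain ⟨t, ht⟩ := hrodd; omega
      have hdvd₁ : (p - r) ∣ 2 ^ α₁ * k₁ := by
        rw [← hs₁, schemmel_factor r p x₁ hp hx₁.ne' hp₁ hpr]
        exact ⟨p ^ (x₁.factorization p - 1) * schemmel r (ordCompl[p] x₁), by ring⟩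
      have hdvd₂ : (p - r) ∣ 2 ^ α₂ * k₂ := by
        rw [← hs₂, schemmel_factor r p x₂ hp hx₂.ne' hp₂ hpr]
        exact ⟨p ^ (x₂.factorization p - 1) * schemmel r (ordCompl[p] x₂), by ring⟩
      obtain ⟨e, he⟩ : ∃ e, p - r = 2 ^ e := by
        have huniq : ∀ {q : ℕ}, q.Prime → q ∣ p - r → q = 2 := by
          intro q hq hqd
          by_contra hq2
          have hqodd : Odd q := hq.odd_of_ne_two hq2
          have hq2' : Nat.Coprime q 2 := hqodd.coprime_two_right
          have hqk₁ : q ∣ k₁ :=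
            (hq2'.pow_right α₁).dvd_of_dvd_mul_left
              (hqd.trans hdvd₁)
          have hqk₂ : q ∣ k₂ :=
            (hq2'.pow_right α₂).dvd_of_dvd_mul_left
              (hqd.trans hdvd₂)
          have : q ∣ 1 := hcop ▸ Nat.dvd_gcd hqk₁ hqk₂
          exact hq.one_lt.ne' (Nat.eq_one_of_dvd_one this)
        exact ⟨_, Nat.eq_prime_pow_of_unique_prime_dvd hdpos.ne' huniq⟩
      -- exponent of p in x₁ or x₂ is 1
      have ha1 : 1 ≤ x₁.factorization p := hp.factorization_pos_of_dvd hx₁.ne' hp₁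
      have hb1 : 1 ≤ x₂.factorization p := hp.factorization_pos_of_dvd hx₂.ne' hp₂
      have hab : x₁.factorization p = 1 ∨ x₂.factorization p = 1 := by
        by_contra hcon
        push_neg at hcon
        have hpk₁ : p ∣ k₁ := by
          have hdv : p ∣ 2 ^ α₁ * k₁ := by
            rw [← hs₁, schemmel_factor r p x₁ hp hx₁.ne' hp₁ hpr]
            have h4 : p ∣ p ^ (x₁.factorization p - 1) := dvd_pow_self p (by omega)
            exact (h4.mul_right _).mul_right _
          exact (hpodd.coprime_two_right.pow_right α₁).dvd_of_dvd_mul_left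
            hdv
        have hpk₂ : p ∣ k₂ := by
          have hdv : p ∣ 2 ^ α₂ * k₂ := by
            rw [← hs₂, schemmel_factor r p x₂ hp hx₂.ne' hp₂ hpr]
            have h4 : p ∣ p ^ (x₂.factorization p - 1) := dvd_pow_self p (by omega)
            exact (h4.mul_right _).mul_right _
          exact (hpodd.coprime_two_right.pow_right α₂).dvd_of_dvd_mul_left
            hdv
        have : p ∣ 1 := hcop ▸ Nat.dvd_gcd hpk₁ hpk₂
        exact hp.one_lt.ne' (Nat.eq_one_of_dvd_one this)
      rcases hab with hab | hab
      · obtain ⟨β, m, hm, hmlt, hsm⟩ :=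
          schemmel_strip r p x₁ α₁ k₁ e hp hx₁ hp₁ hab he hpr hk₁odd hk₁ hs₁
        exact ih m x₂ β α₂ (by omega) hm hx₂ hsm hs₂
      · obtain ⟨β, m, hm, hmlt, hsm⟩ :=
          schemmel_strip r p x₂ α₂ k₂ e hp hx₂ hp₂ hab he hpr hk₂odd hk₂ hs₂
        exact ih x₁ m α₁ β (by omega) hx₁ hm hs₁ hsm

theorem nontotient_factor_of_coprime_split_two (r k k₁ k₂ : ℕ) (hrodd : Odd r)
    (hr : 1 < r) (hk : 0 < k) (hkodd : Odd k)
    (h : ∀ α : ℕ, ¬ ∃ x : ℕ, 0 < x ∧ schemmel r x = 2 ^ α * k)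
    (hk₁ : 0 < k₁) (hk₂ : 0 < k₂) (hcop : Nat.Coprime k₁ k₂) (hmul : k₁ * k₂ = k) :
    (∀ α : ℕ, ¬ ∃ x : ℕ, 0 < x ∧ schemmel r x = 2 ^ α * k₁) ∨
    (∀ α : ℕ, ¬ ∃ x : ℕ, 0 < x ∧ schemmel r x = 2 ^ α * k₂) := by
  by_contra hcon
  push_neg at hcon
  obtain ⟨⟨α₁, x₁, hx₁, hs₁⟩, ⟨α₂, x₂, hx₂, hs₂⟩⟩ := hcon
  have hk₁odd : Odd k₁ := by
    rcases Nat.even_or_odd k₁ with he | ho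
    · exact ((Nat.not_odd_iff_even.mpr (hmul ▸ Nat.even_mul.2 (Or.inl he))) hkodd).elim
    · exact ho
  have hk₂odd : Odd k₂ := by
    rcases Nat.even_or_odd k₂ with he | ho
    · exact ((Nat.not_odd_iff_even.mpr (hmul ▸ Nat.even_mul.2 (Or.inr he))) hkodd).elim
    · exact ho
  obtain ⟨α, x, hx, hsx⟩ :=
    schemmel_key r k₁ k₂ hr hrodd hk₁ hk₂ hk₁odd hk₂odd hcop (x₁ + x₂) x₁ x₂ α₁ α₂
      le_rfl hx₁ hx₂ hs₁ hs₂
  exact h α ⟨x, hx, by rwa [hmul] at hsx⟩
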